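/- arXiv:2104.07510 — 2 statements merged into one kernel-verified Lean document; each statement's English description precedes it below -/
import Mathlib

section
/- Realignment criterion: If ρ is a separable density matrix on ℂ^{d_A} ⊗ ℂ^{d_B} (i.e., ρ = Σ_k p_k σ_k ⊗ τ_k for finitely many density matrices σ_k on ℂ^{d_A}, τ_k on ℂ^{d_B} and weights p_k ≥ 0 with Σ_k p_k = 1), then ‖R(ρ)‖_tr ≤ 1. -/
open Matrix Kronecker ComplexOrder

/-- Trace norm `‖X‖_tr = Tr √(X Xᴴ)`. -/
noncomputable def traceNorm {m n : Type*} [Fintype m] [Fintype n] [DecidableEq m]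
    (X : Matrix m n ℂ) : ℝ :=
  (((Matrix.posSemidef_self_mul_conjTranspose X).1.eigenvectorUnitary : Matrix m m ℂ) *
    diagonal (((↑) : ℝ → ℂ) ∘ (√·) ∘ (Matrix.posSemidef_self_mul_conjTranspose X).1.eigenvalues) *
    (star (Matrix.posSemidef_self_mul_conjTranspose X).1.eigenvectorUnitary : Matrix m m ℂ)).trace.re

/-- A density matrix: positive semidefinite with trace 1. -/
def IsDensityMatrix {n : Type*} [Fintype n] (ρ : Matrix n n ℂ) : Prop :=
  ρ.PosSemidef ∧ ρ.trace = 1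

/-- The realignment map: `R(ρ)_{(i,j),(k,l)} = ρ_{(i,k),(j,l)}`. -/
def realign {dA dB : ℕ} (ρ : Matrix (Fin dA × Fin dB) (Fin dA × Fin dB) ℂ) :
    Matrix (Fin dA × Fin dA) (Fin dB × Fin dB) ℂ :=
  fun p q => ρ (p.1, q.1) (p.2, q.2)

/-- Partial transpose on the second subsystem: `(ρ^{T₂})_{(i,k),(j,l)} = ρ_{(i,l),(j,k)}`. -/
def ptranspose2 {d : ℕ} (ρ : Matrix (Fin d × Fin d) (Fin d × Fin d) ℂ) :
    Matrix (Fin d × Fin d) (Fin d × Fin d) ℂ :=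
  fun p q => ρ (p.1, q.2) (q.1, p.2)

/-- The swap (exchange) operator `F_{(i,k),(j,l)} = δ_{il} δ_{kj}`. -/
def swapOp (d : ℕ) : Matrix (Fin d × Fin d) (Fin d × Fin d) ℂ :=
  fun p q => if p.1 = q.2 ∧ p.2 = q.1 then 1 else 0

/-- The unnormalized maximally entangled projector `(|Ω⟩⟨Ω|)_{(i,k),(j,l)} = δ_{ik} δ_{jl}`. -/
def omegaProj (d : ℕ) : Matrix (Fin d × Fin d) (Fin d × Fin d) ℂ :=
  fun p q => if p.1 = p.2 ∧ q.1 = q.2 then 1 else 0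

/-- Separability: `ρ` is a finite convex combination of products of density matrices. -/
def IsSeparableState {dA dB : ℕ} (ρ : Matrix (Fin dA × Fin dB) (Fin dA × Fin dB) ℂ) : Prop :=
  ∃ (m : ℕ) (p : Fin m → ℝ) (σ : Fin m → Matrix (Fin dA) (Fin dA) ℂ)
    (τ : Fin m → Matrix (Fin dB) (Fin dB) ℂ),
    (∀ k, 0 ≤ p k) ∧ (∑ k, p k = 1) ∧ (∀ k, IsDensityMatrix (σ k)) ∧
    (∀ k, IsDensityMatrix (τ k)) ∧ ρ = ∑ k, (p k : ℂ) • (σ k ⊗ₖ τ k)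

private lemma re_star_dotProduct {ι : Type*} [Fintype ι] (x : ι → ℂ) :
    (star x ⬝ᵥ x).re = ∑ i, ‖x i‖ ^ 2 := by
  rw [dotProduct, Complex.re_sum]
  refine Finset.sum_congr rfl fun i _ => ?_
  simp [Pi.star_apply, Complex.mul_re, Complex.sq_norm,
    Complex.normSq_apply]

/-- Key lemma: if `X = ∑ c k • vecMulVec (u k) (w k)` with `c k ≥ 0` and the vectors
`u k`, `w k` have ℓ² norm at most 1, then `traceNorm X ≤ ∑ c k`. -/
lemma traceNorm_le_of_decomp {m n : Type*} [Fintype m] [Fintype n] [DecidableEq m]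
    (X : Matrix m n ℂ) {K : ℕ} (c : Fin K → ℝ) (u : Fin K → m → ℂ) (w : Fin K → n → ℂ)
    (hc : ∀ k, 0 ≤ c k)
    (hX : X = ∑ k, (c k : ℂ) • Matrix.vecMulVec (u k) (w k))
    (hu : ∀ k, ∑ i, ‖u k i‖ ^ 2 ≤ 1) (hw : ∀ k, ∑ j, ‖w k j‖ ^ 2 ≤ 1) :
    traceNorm X ≤ ∑ k, c k := by
  classical
  set hA := Matrix.posSemidef_self_mul_conjTranspose X with hA_def
  set H : Matrix m m ℂ := (hA.1.eigenvectorUnitary : Matrix m m ℂ) *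
    diagonal (((↑) : ℝ → ℂ) ∘ (√·) ∘ hA.1.eigenvalues) *
    (star hA.1.eigenvectorUnitary : Matrix m m ℂ) with hH_def
  have hHpsd : H.PosSemidef := by
    have hd : (diagonal (((↑) : ℝ → ℂ) ∘ (√·) ∘ hA.1.eigenvalues)).PosSemidef :=
      posSemidef_diagonal_iff.mpr fun i => by simp [Real.sqrt_nonneg]
    have := hd.mul_mul_conjTranspose_same (hA.1.eigenvectorUnitary : Matrix m m ℂ)
    exact this
  have hHh : H.IsHermitian := hHpsd.1
  have hHH : H * H = X * Xᴴ := by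
    have hUU : (star hA.1.eigenvectorUnitary : Matrix m m ℂ) *
        (hA.1.eigenvectorUnitary : Matrix m m ℂ) = 1 :=
      mem_unitaryGroup_iff'.mp hA.1.eigenvectorUnitary.2
    have hDD : diagonal (((↑) : ℝ → ℂ) ∘ (√·) ∘ hA.1.eigenvalues) *
        diagonal (((↑) : ℝ → ℂ) ∘ (√·) ∘ hA.1.eigenvalues) =
        diagonal (RCLike.ofReal ∘ hA.1.eigenvalues) := by
      rw [diagonal_mul_diagonal]
      congr 1
      funext i
      simp [← Complex.ofReal_mul, Real.mul_self_sqrt (hA.eigenvalues_nonneg i)]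
    have e : X * Xᴴ = (hA.1.eigenvectorUnitary : Matrix m m ℂ) *
        diagonal (RCLike.ofReal ∘ hA.1.eigenvalues) *
        (star hA.1.eigenvectorUnitary : Matrix m m ℂ) := hA.1.spectral_theorem
    rw [e, hH_def]
    simp only [Matrix.mul_assoc]
    rw [← Matrix.mul_assoc _ (hA.1.eigenvectorUnitary : Matrix m m ℂ), hUU, Matrix.one_mul,
      ← Matrix.mul_assoc (diagonal _), hDD]
  set V : Matrix m m ℂ := (hHh.eigenvectorUnitary : Matrix m m ℂ) with hV_def
  set lam := hHh.eigenvalues with hlam_def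
  have hVV' : V * star V = 1 := mem_unitaryGroup_iff.mp hHh.eigenvectorUnitary.2
  have hVV : star V * V = 1 := mem_unitaryGroup_iff'.mp hHh.eigenvectorUnitary.2
  set d : m → ℂ := fun i => (lam i : ℂ) with hd_def
  have hspec : H = V * diagonal d * star V := hHh.spectral_theorem
  set dinv : m → ℂ := fun i => if lam i = 0 then 0 else (lam i : ℂ)⁻¹ with hdinv_def
  set p : m → ℂ := fun i => if lam i = 0 then 0 else 1 with hp_def
  set N : Matrix m m ℂ := V * diagonal dinv * star V with hN_def
  set M : Matrix m n ℂ := N * X with hM_def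
  -- N is Hermitian
  have hdinv_star : star dinv = dinv := by
    funext i
    by_cases h : lam i = 0 <;> simp [hdinv_def, h, ← Complex.ofReal_inv]
  have hNh : Nᴴ = N := by
    simp only [hN_def, conjTranspose_mul, conjTranspose_conjTranspose,
      diagonal_conjTranspose, star_eq_conjTranspose, hdinv_star, mul_assoc]
  -- conjugation multiplication rule
  have key : ∀ A B : Matrix m m ℂ,
      (V * A * star V) * (V * B * star V) = V * (A * B) * star V := by
    intro A B
    simp only [Matrix.mul_assoc]
    rw [← Matrix.mul_assoc (star V) V (B * star V), hVV, Matrix.one_mul]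
  -- H * H * N = H
  have hHHN : H * H * N = H := by
    rw [hspec, hN_def, key, key, diagonal_mul_diagonal, diagonal_mul_diagonal]
    have hfun : (fun i => d i * d i * dinv i) = d := by
      funext i
      by_cases h : lam i = 0
      · simp [hd_def, hdinv_def, h]
      · have h' : (lam i : ℂ) ≠ 0 := Complex.ofReal_ne_zero.mpr h
        simp only [hd_def, hdinv_def, if_neg h]
        field_simp
    rw [hfun]
  -- M * Mᴴ = V * diagonal p * star V
  have hMMH : M * Mᴴ = V * diagonal p * star V := by
    have hXXH : X * Xᴴ = (V * diagonal d * star V) * (V * diagonal d * star V) := by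
      rw [← hHH, hspec]
    rw [hM_def, conjTranspose_mul, hNh, show N * X * (Xᴴ * N) = N * (X * Xᴴ) * N by
      simp only [Matrix.mul_assoc], hXXH, hN_def, key, key, key,
      diagonal_mul_diagonal, diagonal_mul_diagonal, diagonal_mul_diagonal]
    have hfun : (fun i => dinv i * (d i * d i) * dinv i) = p := by
      funext i
      by_cases h : lam i = 0
      · simp [hd_def, hdinv_def, hp_def, h]
      · have h' : (lam i : ℂ) ≠ 0 := Complex.ofReal_ne_zero.mpr h
        simp only [hd_def, hdinv_def, hp_def, if_neg h]
        field_simp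
    rw [hfun]
  -- contraction property
  have hcontr : (1 - M * Mᴴ).PosSemidef := by
    have h1 : (1 : Matrix m m ℂ) - M * Mᴴ = V * diagonal (fun i => 1 - p i) * star V := by
      rw [hMMH]
      have : (1 : Matrix m m ℂ) = V * 1 * star V := by rw [Matrix.mul_one, hVV']
      nth_rewrite 1 [this]
      rw [show (diagonal fun i => 1 - p i) = 1 - diagonal p by
        rw [← diagonal_one, diagonal_sub], Matrix.mul_sub, Matrix.sub_mul]
    rw [h1, Matrix.star_eq_conjTranspose]
    refine Matrix.PosSemidef.mul_mul_conjTranspose_same ?_ V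
    refine Matrix.posSemidef_diagonal_iff.mpr fun i => ?_
    by_cases h : lam i = 0 <;> simp [hp_def, h]
  -- trace identity
  have htr : H.trace = (X * Mᴴ).trace := by
    rw [hM_def, conjTranspose_mul, hNh, ← Matrix.mul_assoc, ← hHH, hHHN]
  -- per-term bound
  have hbound : ∀ k, ‖(vecMulVec (u k) (w k) * Mᴴ).trace‖ ≤ 1 := by
    intro k
    set v : n → ℂ := Mᴴ *ᵥ (u k) with hv
    have htreq : (vecMulVec (u k) (w k) * Mᴴ).trace = ∑ q, w k q * v q := by
      simp only [Matrix.trace, Matrix.diag, Matrix.mul_apply, vecMulVec_apply, hv,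
        Matrix.mulVec, dotProduct]
      rw [Finset.sum_comm]
      refine Finset.sum_congr rfl fun q _ => ?_
      rw [Finset.mul_sum]
      refine Finset.sum_congr rfl fun p _ => ?_
      ring
    have hvsq : ∑ q, ‖v q‖ ^ 2 ≤ 1 := by
      have h0 := hcontr.dotProduct_mulVec_nonneg (u k)
      rw [Complex.le_def] at h0
      have hdot : star (u k) ⬝ᵥ ((1 - M * Mᴴ) *ᵥ u k)
          = star (u k) ⬝ᵥ u k - star v ⬝ᵥ v := by
        rw [Matrix.sub_mulVec, dotProduct_sub, Matrix.one_mulVec]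
        congr 1
        have hsv : star v = star (u k) ᵥ* M := by
          rw [hv, star_mulVec, conjTranspose_conjTranspose]
        rw [hsv, ← dotProduct_mulVec, hv, mulVec_mulVec]
      rw [hdot] at h0
      have h1 := h0.1
      rw [Complex.sub_re, re_star_dotProduct, re_star_dotProduct] at h1
      simp only [Complex.zero_re] at h1
      have := hu k
      linarith [h1]
    have hCS : (∑ q, ‖w k q‖ * ‖v q‖) ^ 2 ≤ 1 := by
      calc (∑ q, ‖w k q‖ * ‖v q‖) ^ 2
          ≤ (∑ q, ‖w k q‖ ^ 2) * ∑ q, ‖v q‖ ^ 2 :=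
            Finset.sum_mul_sq_le_sq_mul_sq _ _ _
        _ ≤ 1 * 1 := by
            refine mul_le_mul (hw k) hvsq ?_ ?_
            · exact Finset.sum_nonneg fun q _ => sq_nonneg _
            · linarith [hw k, Finset.sum_nonneg (fun q (_ : q ∈ Finset.univ) =>
                sq_nonneg (‖w k q‖))]
        _ = 1 := one_mul 1
    have hnn : 0 ≤ ∑ q, ‖w k q‖ * ‖v q‖ :=
      Finset.sum_nonneg fun q _ => mul_nonneg (norm_nonneg _) (norm_nonneg _)
    have hCS' : ∑ q, ‖w k q‖ * ‖v q‖ ≤ 1 :=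
      (pow_le_one_iff_of_nonneg hnn two_ne_zero).mp hCS
    calc ‖(vecMulVec (u k) (w k) * Mᴴ).trace‖ = ‖∑ q, w k q * v q‖ := by rw [htreq]
      _ ≤ ∑ q, ‖w k q * v q‖ := norm_sum_le _ _
      _ = ∑ q, ‖w k q‖ * ‖v q‖ := by simp [norm_mul]
      _ ≤ 1 := hCS'
  -- assemble
  have hXM : ((X * Mᴴ).trace).re = ∑ k, c k * ((vecMulVec (u k) (w k) * Mᴴ).trace).re := by
    rw [hX, Matrix.sum_mul]
    simp only [Matrix.smul_mul, Matrix.trace_sum, Matrix.trace_smul, Complex.re_sum]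
    refine Finset.sum_congr rfl fun k _ => ?_
    simp [Complex.smul_re]
  have : traceNorm X = (H.trace).re := rfl
  rw [this, htr, hXM]
  calc ∑ k, c k * ((vecMulVec (u k) (w k) * Mᴴ).trace).re
      ≤ ∑ k, c k * 1 := by
        refine Finset.sum_le_sum fun k _ => mul_le_mul_of_nonneg_left ?_ (hc k)
        exact le_trans (Complex.re_le_norm _)
          (by exact hbound k)
    _ = ∑ k, c k := by simp

/-- Frobenius norm of a density matrix is at most 1. -/
private lemma frobenius_sq_le_one {d : ℕ} {σ : Matrix (Fin d) (Fin d) ℂ}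
    (h : IsDensityMatrix σ) : ∑ p : Fin d × Fin d, ‖σ p.1 p.2‖ ^ 2 ≤ 1 := by
  classical
  obtain ⟨hpsd, htr⟩ := h
  have hherm : σ.IsHermitian := hpsd.1
  set V : Matrix (Fin d) (Fin d) ℂ := (hherm.eigenvectorUnitary : Matrix (Fin d) (Fin d) ℂ)
    with hV_def
  set lam := hherm.eigenvalues with hlam_def
  have hVV : star V * V = 1 := mem_unitaryGroup_iff'.mp hherm.eigenvectorUnitary.2
  set D : Matrix (Fin d) (Fin d) ℂ := diagonal (RCLike.ofReal ∘ lam) with hD_def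
  have hspec : σ = V * D * star V := hherm.spectral_theorem
  -- trace of σ equals sum of eigenvalues
  have htrlam : ∑ i, lam i = 1 := by
    have h : σ.trace = ∑ i, (lam i : ℂ) := by
      rw [hspec, Matrix.trace_mul_cycle, hVV, Matrix.one_mul, hD_def, Matrix.trace_diagonal]
      rfl
    rw [htr] at h
    have h2 := congrArg Complex.re h.symm
    simpa [Complex.re_sum] using h2
  -- trace of σ * σ equals sum of squares of eigenvalues
  have htr2 : (σ * σ).trace = ∑ i, ((lam i : ℂ)) ^ 2 := by
    rw [hspec, show V * D * star V * (V * D * star V) = V * (D * ((star V * V) * D)) * star V by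
      simp only [Matrix.mul_assoc], hVV, Matrix.one_mul,
      Matrix.trace_mul_cycle, hVV, Matrix.one_mul, hD_def,
      diagonal_mul_diagonal, Matrix.trace_diagonal]
    refine Finset.sum_congr rfl fun i _ => ?_
    simp [sq]
  -- Frobenius norm squared equals trace of σ * σᴴ
  have hfrob : ((σ * σᴴ).trace).re = ∑ p : Fin d × Fin d, ‖σ p.1 p.2‖ ^ 2 := by
    rw [Matrix.trace, Complex.re_sum, Fintype.sum_prod_type]
    refine Finset.sum_congr rfl fun i _ => ?_
    simp only [Matrix.diag, Matrix.mul_apply, conjTranspose_apply, Complex.re_sum]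
    refine Finset.sum_congr rfl fun j _ => ?_
    simp [Complex.mul_re, Complex.sq_norm, Complex.normSq_apply]
  calc ∑ p : Fin d × Fin d, ‖σ p.1 p.2‖ ^ 2 = ((σ * σᴴ).trace).re := hfrob.symm
    _ = ((σ * σ).trace).re := by rw [hherm.eq]
    _ = ∑ i, lam i ^ 2 := by
        rw [htr2, Complex.re_sum]
        refine Finset.sum_congr rfl fun i _ => ?_
        simp [← Complex.ofReal_pow]
    _ ≤ (∑ i, lam i) ^ 2 :=
        Finset.sum_sq_le_sq_sum_of_nonneg fun i _ => hpsd.eigenvalues_nonneg i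
    _ = 1 := by rw [htrlam]; norm_num

/-- **Realignment criterion.** If `ρ` is a separable density matrix, then
`‖R(ρ)‖_tr ≤ 1`. -/
theorem realignment_criterion {dA dB : ℕ}
    (ρ : Matrix (Fin dA × Fin dB) (Fin dA × Fin dB) ℂ)
    (hρ : IsDensityMatrix ρ) (hsep : IsSeparableState ρ) :
    traceNorm (realign ρ) ≤ 1 := by
  obtain ⟨m, p, σ, τ, hp, hpsum, hσ, hτ, hρeq⟩ := hsep
  set u : Fin m → (Fin dA × Fin dA) → ℂ := fun k q => σ k q.1 q.2 with hu_def
  set w : Fin m → (Fin dB × Fin dB) → ℂ := fun k q => τ k q.1 q.2 with hw_def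
  have hdecomp : realign ρ = ∑ k, (p k : ℂ) • Matrix.vecMulVec (u k) (w k) := by
    ext q r
    rw [hρeq]
    simp [realign, Matrix.sum_apply, vecMulVec_apply, kroneckerMap_apply, hu_def, hw_def]
  have h := traceNorm_le_of_decomp (realign ρ) p u w hp hdecomp
    (fun k => by
      have := frobenius_sq_le_one (hσ k)
      simpa [hu_def] using this)
    (fun k => by
      have := frobenius_sq_le_one (hτ k)
      simpa [hw_def] using this)
  rw [hpsum] at h
  exact h
end

section
/- Weak realignment criterion: for every bipartite density matrix ρ on ℂ^d ⊗ ℂ^d, the trace of the realigned matrix satisfies Tr R(ρ) = ⟨Ω| ρ |Ω⟩ and ‖R(ρ)‖_tr ≥ ⟨Ω| ρ |Ω⟩ (where ⟨Ω| ρ |Ω⟩ = Σ_{i,j} ρ_{(i,i),(j,j)} is a real number). Consequently, if ρ is separable (a convex combination of products of density matrices), then ⟨Ω| ρ |Ω⟩ ≤ 1. -/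
open Matrix Kronecker ComplexOrder

namespace WeakRealign
variable {n : Type*} [Fintype n] [DecidableEq n]

lemma inner_equiv_symm {ι : Type*} [Fintype ι] (x y : ι → ℂ) :
    inner ℂ ((WithLp.equiv 2 (ι → ℂ)).symm x) ((WithLp.equiv 2 (ι → ℂ)).symm y)
      = dotProduct (star x) y := by
  simp [EuclideanSpace.inner_toLp_toLp, dotProduct_comm]


lemma trace_eq_sum_eig {A : Matrix n n ℂ} (hA : A.IsHermitian) :
    A.trace = ∑ i, (hA.eigenvalues i : ℂ) := by
  conv_lhs => rw [hA.spectral_theorem, Unitary.conjStarAlgAut_apply]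
  rw [trace_mul_cycle, Matrix.mem_unitaryGroup_iff'.mp (hA.eigenvectorUnitary).2, one_mul,
    trace_diagonal]
  rfl

lemma trace_sq_eq_sum_eig {A : Matrix n n ℂ} (hA : A.IsHermitian) :
    (A * A).trace = ∑ i, ((hA.eigenvalues i : ℂ))^2 := by
  have h : A * A = (hA.eigenvectorUnitary : Matrix n n ℂ) *
      (diagonal (RCLike.ofReal ∘ hA.eigenvalues) * diagonal (RCLike.ofReal ∘ hA.eigenvalues)) *
      (star (hA.eigenvectorUnitary : Matrix n n ℂ)) := by
    conv_lhs => rw [hA.spectral_theorem, Unitary.conjStarAlgAut_apply]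
    simp only [Matrix.mul_assoc]
    rw [← Matrix.mul_assoc (star (hA.eigenvectorUnitary : Matrix n n ℂ)),
      Matrix.mem_unitaryGroup_iff'.mp (hA.eigenvectorUnitary).2, one_mul]
  rw [h, trace_mul_cycle, Matrix.mem_unitaryGroup_iff'.mp (hA.eigenvectorUnitary).2, one_mul,
    diagonal_mul_diagonal, trace_diagonal]
  simp [sq]

lemma traceNorm_eq_sum (X : Matrix n n ℂ) :
    traceNorm X = ∑ i, Real.sqrt ((Matrix.posSemidef_self_mul_conjTranspose X).1.eigenvalues i) := by
  rw [traceNorm, trace_mul_cycle,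
    Matrix.mem_unitaryGroup_iff'.mp ((Matrix.posSemidef_self_mul_conjTranspose X).1.eigenvectorUnitary).2,
    one_mul, trace_diagonal]

  simp

lemma re_trace_le_traceNorm (X : Matrix n n ℂ) : (X.trace).re ≤ traceNorm X := by
  set hA := Matrix.posSemidef_self_mul_conjTranspose X with hAdef
  set hH := hA.1
  set U : Matrix n n ℂ := (hH.eigenvectorUnitary : Matrix n n ℂ) with hU
  have hUU : U * star U = 1 := Matrix.mem_unitaryGroup_iff.mp (hH.eigenvectorUnitary).2
  have htr : X.trace = (star U * X * U).trace := by
    rw [trace_mul_cycle, hUU, one_mul]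
  rw [htr, traceNorm_eq_sum, trace, Complex.re_sum]
  apply Finset.sum_le_sum
  intro i _
  set v : n → ℂ := ⇑(hH.eigenvectorBasis i) with hv
  have hva : ∀ a, U a i = v a := fun a => hH.eigenvectorUnitary_apply a i
  have hentry : (star U * X * U).diag i = dotProduct (star v) (X *ᵥ v) := by
    simp only [Matrix.diag, mul_apply, star_apply, dotProduct, mulVec, Finset.sum_mul,
      Finset.mul_sum, hva, dotProduct]
    rw [Finset.sum_comm]
    apply Finset.sum_congr rfl; intro a _
    apply Finset.sum_congr rfl; intro b _
    simp only [Pi.star_apply]; ring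
  have hform : dotProduct (star v) (X *ᵥ v)
      = dotProduct (star (Xᴴ *ᵥ v)) v := by
    rw [dotProduct_mulVec, star_mulVec, conjTranspose_conjTranspose]
  set w : n → ℂ := Xᴴ *ᵥ v with hw
  have hvv : dotProduct (star v) v = 1 := by
    have h1 : ‖hH.eigenvectorBasis i‖ = 1 := hH.eigenvectorBasis.orthonormal.1 i
    have h2 : (inner ℂ (hH.eigenvectorBasis i) (hH.eigenvectorBasis i) : ℂ)
        = dotProduct (star v) v := by
        rw [EuclideanSpace.inner_eq_star_dotProduct, dotProduct_comm]
    rw [← h2, inner_self_eq_norm_sq_to_K, h1]; norm_num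
  have hww : dotProduct (star w) w = ((hH.eigenvalues i : ℝ) : ℂ) := by
    have h1 : dotProduct (star w) w = dotProduct (star v) ((X * Xᴴ) *ᵥ v) := by
      rw [hw, star_mulVec, conjTranspose_conjTranspose, ← dotProduct_mulVec, mulVec_mulVec]
    have h2 : (X * Xᴴ) *ᵥ v = (hH.eigenvalues i) • v := hH.mulVec_eigenvectorBasis i
    rw [h1, h2]
    have : dotProduct (star v) ((hH.eigenvalues i) • v)
        = (hH.eigenvalues i) • dotProduct (star v) v := dotProduct_smul _ _ _
    rw [this, hvv]
    simp [Complex.real_smul]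
  -- now the Cauchy-Schwarz step
  have hcs : ‖dotProduct (star w) v‖ ≤ ‖(WithLp.equiv 2 (n → ℂ)).symm w‖
      * ‖(WithLp.equiv 2 (n → ℂ)).symm v‖ := by
    rw [← inner_equiv_symm]
    exact norm_inner_le_norm _ _
  have hnv : ‖(WithLp.equiv 2 (n → ℂ)).symm v‖ = 1 := hH.eigenvectorBasis.orthonormal.1 i
  have hnw : ‖(WithLp.equiv 2 (n → ℂ)).symm w‖ = Real.sqrt (hH.eigenvalues i) := by
    rw [norm_eq_sqrt_re_inner (𝕜 := ℂ), inner_equiv_symm, hww]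
    norm_num
  calc ((star U * X * U).diag i).re ≤ ‖(star U * X * U).diag i‖ := Complex.re_le_norm _
    _ = ‖dotProduct (star w) v‖ := by rw [hentry, hform]
    _ ≤ Real.sqrt (hH.eigenvalues i) := by rw [hnv, hnw] at hcs; simpa using hcs

lemma frob_sq_le_one {σ : Matrix n n ℂ} (hσ : IsDensityMatrix σ) :
    ∑ p : n × n, ‖σ p.1 p.2‖ ^ 2 ≤ 1 := by
  obtain ⟨hps, htr⟩ := hσ
  have hH := hps.1
  have h1 : ((∑ p : n × n, ‖σ p.1 p.2‖ ^ 2 : ℝ) : ℂ) = (σ * σ).trace := by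
    rw [trace, Fintype.sum_prod_type]
    push_cast
    apply Finset.sum_congr rfl; intro i _
    rw [Matrix.diag, mul_apply]
    apply Finset.sum_congr rfl; intro j _
    rw [← hH.apply j i]
    rw [show (star (σ i j)) = (starRingEnd ℂ) (σ i j) from rfl, Complex.mul_conj,
      Complex.normSq_eq_norm_sq]
    norm_num
  have h2 : (σ * σ).trace = ∑ i, ((hH.eigenvalues i : ℂ))^2 := trace_sq_eq_sum_eig hH
  have h3 : ∑ i, hH.eigenvalues i = 1 := by
    have := trace_eq_sum_eig hH
    rw [htr] at this
    have : (1 : ℂ).re = (∑ i, (hH.eigenvalues i : ℂ)).re := by rw [this]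
    simpa using this.symm
  have h4 : ∑ p : n × n, ‖σ p.1 p.2‖ ^ 2 = ∑ i, (hH.eigenvalues i)^2 := by
    have h5 : ((∑ p : n × n, ‖σ p.1 p.2‖ ^ 2 : ℝ) : ℂ)
        = ((∑ i, (hH.eigenvalues i)^2 : ℝ) : ℂ) := by
      rw [h1, h2]; push_cast; ring
    exact_mod_cast h5
  rw [h4]
  calc ∑ i, (hH.eigenvalues i)^2 ≤ ∑ i, hH.eigenvalues i * 1 := by
        apply Finset.sum_le_sum
        intro i _
        rw [sq]
        apply mul_le_mul_of_nonneg_left _ (hps.eigenvalues_nonneg i)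
        rw [← h3]
        exact Finset.single_le_sum (fun j _ => hps.eigenvalues_nonneg j) (Finset.mem_univ i)
    _ = 1 := by simp [h3]

lemma pair_sum_le_one {σ τ : Matrix n n ℂ} (hσ : IsDensityMatrix σ) (hτ : IsDensityMatrix τ) :
    ‖∑ i, ∑ j, σ i j * τ i j‖ ≤ 1 := by
  have key : ∑ i, ∑ j, σ i j * τ i j
      = dotProduct (fun p : n × n => σ p.1 p.2) (fun p : n × n => τ p.1 p.2) := by
    rw [dotProduct, Fintype.sum_prod_type]
  set a : (n × n) → ℂ := fun p => σ p.1 p.2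
  set b : (n × n) → ℂ := fun p => τ p.1 p.2
  have hinner : (inner ℂ ((WithLp.equiv 2 ((n × n) → ℂ)).symm (star a))
      ((WithLp.equiv 2 ((n × n) → ℂ)).symm b) : ℂ) = dotProduct a b := by
    rw [inner_equiv_symm, star_star]
  have hcs := norm_inner_le_norm (𝕜 := ℂ)
    ((WithLp.equiv 2 ((n × n) → ℂ)).symm (star a)) ((WithLp.equiv 2 ((n × n) → ℂ)).symm b)
  rw [hinner] at hcs
  have hna : ‖(WithLp.equiv 2 ((n × n) → ℂ)).symm (star a)‖ ≤ 1 := by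
    rw [EuclideanSpace.norm_eq]
    refine Real.sqrt_le_one.mpr ?_
    calc ∑ p : n × n, ‖star a p‖ ^ 2 = ∑ p : n × n, ‖σ p.1 p.2‖ ^ 2 := by
          simp [a, Pi.star_apply]
      _ ≤ 1 := frob_sq_le_one hσ
  have hnb : ‖(WithLp.equiv 2 ((n × n) → ℂ)).symm b‖ ≤ 1 := by
    rw [EuclideanSpace.norm_eq]
    refine Real.sqrt_le_one.mpr ?_
    calc ∑ p : n × n, ‖b p‖ ^ 2 = ∑ p : n × n, ‖τ p.1 p.2‖ ^ 2 := rfl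
      _ ≤ 1 := frob_sq_le_one hτ
  rw [key]
  calc ‖dotProduct a b‖ ≤ ‖(WithLp.equiv 2 ((n × n) → ℂ)).symm (star a)‖
        * ‖(WithLp.equiv 2 ((n × n) → ℂ)).symm b‖ := hcs
    _ ≤ 1 * 1 := by
        apply mul_le_mul hna hnb (norm_nonneg _) (by norm_num)
    _ = 1 := by norm_num

end WeakRealign

/-- **Weak realignment criterion:** `Tr R(ρ) = ⟨Ω|ρ|Ω⟩`, `‖R(ρ)‖_tr ≥ ⟨Ω|ρ|Ω⟩`, and
for separable `ρ`, `⟨Ω|ρ|Ω⟩ ≤ 1`. -/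
theorem weak_realignment_criterion {d : ℕ}
    (ρ : Matrix (Fin d × Fin d) (Fin d × Fin d) ℂ)
    (hρ : IsDensityMatrix ρ) :
    (realign ρ).trace = ∑ i, ∑ j, ρ (i, i) (j, j) ∧
    (∑ i, ∑ j, ρ (i, i) (j, j)).re ≤ traceNorm (realign ρ) ∧
    (IsSeparableState ρ → (∑ i, ∑ j, ρ (i, i) (j, j)).re ≤ 1) := by
  have h1 : (realign ρ).trace = ∑ i, ∑ j, ρ (i, i) (j, j) := by
    rw [Matrix.trace, ← Fintype.sum_prod_type']
    rfl
  refine ⟨h1, ?_, ?_⟩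
  · rw [← h1]
    exact WeakRealign.re_trace_le_traceNorm (realign ρ)
  · rintro ⟨m, p, σ, τ, hp, hps, hσ, hτ, heq⟩
    have hsum : ∑ i, ∑ j, ρ (i, i) (j, j)
        = ∑ k, (p k : ℂ) * (∑ i, ∑ j, σ k i j * τ k i j) := by
      subst heq
      simp only [Matrix.sum_apply, Matrix.smul_apply, Matrix.kroneckerMap_apply,
        smul_eq_mul, Finset.mul_sum]
      have hswap : ∀ i : Fin d, ∑ j : Fin d, ∑ k : Fin m, (p k : ℂ) * (σ k i j * τ k i j)
          = ∑ k : Fin m, ∑ j : Fin d, (p k : ℂ) * (σ k i j * τ k i j) :=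
        fun i => Finset.sum_comm
      simp only [hswap]
      rw [Finset.sum_comm]
    rw [hsum, Complex.re_sum]
    calc ∑ k, ((p k : ℂ) * (∑ i, ∑ j, σ k i j * τ k i j)).re
        = ∑ k, p k * (∑ i, ∑ j, σ k i j * τ k i j).re := by
          apply Finset.sum_congr rfl; intro k _
          exact Complex.re_ofReal_mul _ _
      _ ≤ ∑ k, p k * 1 := by
          apply Finset.sum_le_sum
          intro k _
          apply mul_le_mul_of_nonneg_left _ (hp k)
          calc (∑ i, ∑ j, σ k i j * τ k i j).re
              ≤ ‖∑ i, ∑ j, σ k i j * τ k i j‖ := Complex.re_le_norm _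
            _ ≤ 1 := WeakRealign.pair_sum_le_one (hσ k) (hτ k)
      _ = 1 := by simp only [mul_one]; exact hps
end
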